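/- Let B₁ ≠ B₂ ∈ ℂ, let d ∈ ℂ, d ≠ 0, and let ℓ = {B₁ + t·d : t ∈ ℝ} be a line through B₁ that is different from the line through B₁ and B₂ (i.e. d is not a real multiple of B₂ − B₁). Then there exists a rotation R about B₁ with R ≠ id such that |R(P) − B₂| = |P − B₂| for every P ∈ ℓ. -/

import Mathlib

/-- If all measurement points sensed by a second anchor `B₂` lie on a line through the
first anchor `B₁` distinct from the line `B₁B₂`, then some non-identity rotation about
`B₁` preserves all range measurements from `B₂` for points of that line. -/
theorem rotation_example_indistinguishable (B1 B2 : ℂ) (hB : B1 ≠ B2)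
    (d : ℂ) (hd : d ≠ 0) (hdir : ∀ t : ℝ, d ≠ (t : ℂ) * (B2 - B1)) :
    ∃ a : ℂ, ‖a‖ = 1 ∧ (fun z => B1 + a * (z - B1)) ≠ (id : ℂ → ℂ) ∧
      ∀ P : ℂ, (∃ t : ℝ, P = B1 + (t : ℂ) * d) →
        ‖(B1 + a * (P - B1)) - B2‖ = ‖P - B2‖ := by
  set w : ℂ := B2 - B1 with hw
  have hw0 : w ≠ 0 := sub_ne_zero.mpr (Ne.symm hB)
  have hcd : (starRingEnd ℂ) d ≠ 0 := by simpa using hd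
  have hcw : (starRingEnd ℂ) w ≠ 0 := by simpa using hw0
  have habsd : ‖d‖ ≠ 0 := norm_ne_zero_iff.mpr hd
  have habsw : ‖w‖ ≠ 0 := norm_ne_zero_iff.mpr hw0
  have hB2 : B2 = B1 + w := by rw [hw]; ring
  refine ⟨(starRingEnd ℂ) d * w / (d * (starRingEnd ℂ) w), ?_, ?_, ?_⟩
  · rw [norm_div, norm_mul, norm_mul, Complex.norm_conj, Complex.norm_conj]
    rw [mul_comm ‖d‖]
    exact div_self (mul_ne_zero habsw habsd)
  · intro hfun
    have ha1 : (starRingEnd ℂ) d * w / (d * (starRingEnd ℂ) w) = 1 := by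
      have := congrFun hfun (B1 + 1)
      simpa using this
    have heq : (starRingEnd ℂ) d * w = d * (starRingEnd ℂ) w := by
      field_simp at ha1; linear_combination ha1
    have hreal : (starRingEnd ℂ) (d * (starRingEnd ℂ) w) = d * (starRingEnd ℂ) w := by
      rw [map_mul, Complex.conj_conj]; linear_combination heq
    have hc : d * (starRingEnd ℂ) w = (((d * (starRingEnd ℂ) w).re : ℝ) : ℂ) :=
      (Complex.conj_eq_iff_re.mp hreal).symm
    apply hdir ((d * (starRingEnd ℂ) w).re / Complex.normSq w)
    push_cast
    rw [div_mul_eq_mul_div, eq_div_iff (by simpa using hw0)]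
    calc d * (Complex.normSq w : ℂ) = (d * (starRingEnd ℂ) w) * w := by
          rw [← Complex.mul_conj]; ring
      _ = (((d * (starRingEnd ℂ) w).re : ℝ) : ℂ) * w := by rw [← hc]
  · rintro P ⟨t, rfl⟩
    have key : B1 + (starRingEnd ℂ) d * w / (d * (starRingEnd ℂ) w) * (B1 + (t : ℂ) * d - B1) - B2
        = (w / (starRingEnd ℂ) w) * ((t : ℂ) * (starRingEnd ℂ) d - (starRingEnd ℂ) w) := by
      rw [hB2]; field_simp; ring
    rw [key, norm_mul, norm_div, Complex.norm_conj, div_self habsw, one_mul]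
    have h2 : (t : ℂ) * (starRingEnd ℂ) d - (starRingEnd ℂ) w
        = (starRingEnd ℂ) ((t : ℂ) * d - w) := by
      simp [map_sub, map_mul]
    rw [h2, Complex.norm_conj]
    congr 1
    rw [hw]; ring
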